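/- Variance bound for the variance-reduced stochastic gradient: with i sampled with probability pᵢ, v = (∇f_i(w) − ∇f_i(w̃))/(n pᵢ) + ∇f(w̃), one has E[v] = ∇f(w) and E‖v − ∇f(w)‖² ≤ 4 L_P (f(w) − f* + f(w̃) − f*), where w, w̃ ∈ W and f* = min_{u∈W} f(u). -/

import Mathlib

open RealInnerProductSpace

section auxStmt18
variable {F : Type*} [NormedAddCommGroup F] [InnerProductSpace ℝ F] [CompleteSpace F]

lemma grad_inner_eq (g : F → ℝ) (x v : F) :
    ⟪gradient g x, v⟫ = fderiv ℝ g x v := by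
  rw [gradient, InnerProductSpace.toDual_symm_apply]

lemma line_hasDerivAt (g : F → ℝ) (hg : Differentiable ℝ g) (x v : F) (t : ℝ) :
    HasDerivAt (fun s : ℝ => g (x + s • v)) ⟪gradient g (x + t • v), v⟫ t := by
  have hl : HasDerivAt (fun s : ℝ => x + s • v) v t := by
    simpa using ((hasDerivAt_id t).smul_const v).const_add x
  have h := (hg (x + t • v)).hasFDerivAt.comp_hasDerivAt t hl
  rw [grad_inner_eq]
  exact h

lemma convex_grad_ineq (g : F → ℝ) (hconv : ConvexOn ℝ Set.univ g)
    (hg : Differentiable ℝ g) (x y : F) :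
    g x + ⟪gradient g x, y - x⟫ ≤ g y := by
  set φ : ℝ → ℝ := fun t => g (x + t • (y - x)) with hφ
  have hφc : ConvexOn ℝ Set.univ φ := by
    have h := hconv.comp_affineMap (AffineMap.lineMap x y)
    have : φ = g ∘ (AffineMap.lineMap x y) := by
      funext t
      simp [hφ, AffineMap.lineMap_apply]
      rw [add_comm]
    rw [this]
    simpa using h
  have hd : HasDerivAt φ ⟪gradient g (x + (0:ℝ) • (y - x)), y - x⟫ 0 :=
    line_hasDerivAt g hg x (y - x) 0
  have hs := hφc.le_slope_of_hasDerivAt (Set.mem_univ 0) (Set.mem_univ 1) zero_lt_one hd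
  rw [slope_def_field] at hs
  simp only [zero_smul, add_zero] at hs
  have h1 : φ 1 = g y := by simp [hφ]
  have h0 : φ 0 = g x := by simp [hφ]
  rw [h1, h0] at hs
  simp at hs
  rw [grad_inner_eq, map_sub]
  linarith

lemma descent_lemma (g : F → ℝ) (hg : Differentiable ℝ g) {L : ℝ} (hL : 0 ≤ L)
    (hlip : ∀ a b, ‖gradient g a - gradient g b‖ ≤ L * ‖a - b‖) (x y : F) :
    g y ≤ g x + ⟪gradient g x, y - x⟫ + L / 2 * ‖y - x‖ ^ 2 := by
  set v := y - x with hv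
  have hgc : Continuous (gradient g) := by
    refine (LipschitzWith.of_dist_le_mul (K := Real.toNNReal L)
      (f := gradient g) ?_).continuous
    intro a b
    rw [dist_eq_norm, dist_eq_norm]
    simpa [Real.coe_toNNReal L hL] using hlip a b
  have hcont : Continuous fun t : ℝ => ⟪gradient g (x + t • v), v⟫ := by
    exact (Continuous.inner (hgc.comp (by continuity)) continuous_const)
  have key : g (x + v) - g x = ∫ t in (0:ℝ)..1, ⟪gradient g (x + t • v), v⟫ := by
    rw [intervalIntegral.integral_eq_sub_of_hasDerivAt
      (fun t _ => line_hasDerivAt g hg x v t) (hcont.intervalIntegrable 0 1)]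
    simp
  have hbound : ∀ t ∈ Set.Icc (0:ℝ) 1,
      ⟪gradient g (x + t • v), v⟫ ≤ ⟪gradient g x, v⟫ + L * t * ‖v‖ ^ 2 := by
    intro t ht
    have h1 : ⟪gradient g (x + t • v), v⟫ - ⟪gradient g x, v⟫
        = ⟪gradient g (x + t • v) - gradient g x, v⟫ := by
      rw [inner_sub_left]
    have h2 : ⟪gradient g (x + t • v) - gradient g x, v⟫
        ≤ ‖gradient g (x + t • v) - gradient g x‖ * ‖v‖ := real_inner_le_norm _ _
    have h3 : ‖gradient g (x + t • v) - gradient g x‖ ≤ L * (t * ‖v‖) := by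
      have := hlip (x + t • v) x
      simpa [norm_smul, abs_of_nonneg ht.1, mul_assoc] using this
    have h4 : ‖gradient g (x + t • v) - gradient g x‖ * ‖v‖ ≤ L * (t * ‖v‖) * ‖v‖ :=
      mul_le_mul_of_nonneg_right h3 (norm_nonneg v)
    nlinarith [norm_nonneg v]
  have hInt : ∫ t in (0:ℝ)..1, ⟪gradient g (x + t • v), v⟫
      ≤ ∫ t in (0:ℝ)..1, (⟪gradient g x, v⟫ + L * t * ‖v‖ ^ 2) := by
    apply intervalIntegral.integral_mono_on zero_le_one (hcont.intervalIntegrable 0 1)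
    · exact (Continuous.intervalIntegrable (by continuity) 0 1)
    · exact hbound
  have hInt2 : ∫ t in (0:ℝ)..1, (⟪gradient g x, v⟫ + L * t * ‖v‖ ^ 2)
      = ⟪gradient g x, v⟫ + L / 2 * ‖v‖ ^ 2 := by
    rw [intervalIntegral.integral_add (intervalIntegrable_const)
      (Continuous.intervalIntegrable (by continuity) 0 1)]
    simp only [intervalIntegral.integral_const]
    have : ∫ t in (0:ℝ)..1, L * t * ‖v‖ ^ 2 = L * ‖v‖^2 * ∫ t in (0:ℝ)..1, t := by
      rw [← intervalIntegral.integral_const_mul]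
      congr 1; funext t; ring
    rw [this, integral_id]
    simp
    ring
  have hxy : x + v = y := by rw [hv]; abel
  rw [hxy] at key
  linarith [key, hInt.trans_eq hInt2]

lemma inner_hasGradientAt (c : F) (z : F) : HasGradientAt (fun u => ⟪c, u⟫) c z := by
  have h := (innerSL ℝ c).hasFDerivAt (x := z)
  rw [hasFDerivAt_iff_hasGradientAt] at h
  have he : (InnerProductSpace.toDual ℝ F) c = innerSL ℝ c := by
    ext u
    simp [InnerProductSpace.toDual_apply_apply]
  rw [← he, LinearIsometryEquiv.symm_apply_apply] at h
  exact h

lemma cocoercive (g : F → ℝ) (hconv : ConvexOn ℝ Set.univ g) (hg : Differentiable ℝ g)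
    {L : ℝ} (hL : 0 ≤ L) (hlip : ∀ a b, ‖gradient g a - gradient g b‖ ≤ L * ‖a - b‖)
    (x y : F) :
    ‖gradient g x - gradient g y‖ ^ 2 ≤ 2 * L * (g x - g y - ⟪gradient g y, x - y⟫) := by
  rcases eq_or_lt_of_le hL with h0 | hLpos
  · have h1 : ‖gradient g x - gradient g y‖ ≤ 0 := by simpa [← h0] using hlip x y
    have h2 : ‖gradient g x - gradient g y‖ = 0 := le_antisymm h1 (norm_nonneg _)
    rw [h2, ← h0]
    ring_nf
    positivity
  set c := gradient g y with hc
  set φ : F → ℝ := fun z => g z - ⟪c, z⟫ with hφ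
  have hinnerdiff : Differentiable ℝ (fun z : F => ⟪c, z⟫) := (innerSL ℝ c).differentiable
  have hφdiff : Differentiable ℝ φ := hg.sub hinnerdiff
  have hφgrad : ∀ z, gradient φ z = gradient g z - c := by
    intro z
    have h1 : HasFDerivAt φ ((InnerProductSpace.toDual ℝ F) (gradient g z)
        - (InnerProductSpace.toDual ℝ F) c) z :=
      ((hg z).hasGradientAt.hasFDerivAt).sub (inner_hasGradientAt c z).hasFDerivAt
    rw [← map_sub] at h1
    have h2 := h1.hasGradientAt.gradient
    rwa [LinearIsometryEquiv.symm_apply_apply] at h2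
  have hφconv : ConvexOn ℝ Set.univ φ := by
    refine ⟨convex_univ, fun a _ b _ s t hs ht hst => ?_⟩
    have hg' := hconv.2 (Set.mem_univ a) (Set.mem_univ b) hs ht hst
    simp only [hφ, smul_eq_mul]
    rw [inner_add_right, real_inner_smul_right, real_inner_smul_right]
    dsimp at hg' ⊢
    linarith
  have hφlip : ∀ a b, ‖gradient φ a - gradient φ b‖ ≤ L * ‖a - b‖ := by
    intro a b
    rw [hφgrad, hφgrad, sub_sub_sub_cancel_right]
    exact hlip a b
  have hmin : φ y ≤ φ (x - L⁻¹ • gradient φ x) := by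
    have h := convex_grad_ineq φ hφconv hφdiff y (x - L⁻¹ • gradient φ x)
    rw [hφgrad] at h
    simp [hc] at h
    exact h
  have hdesc := descent_lemma φ hφdiff hL hφlip x (x - L⁻¹ • gradient φ x)
  have hpt : (x - L⁻¹ • gradient φ x) - x = -(L⁻¹ • gradient φ x) := by abel
  rw [hpt] at hdesc
  have e1 : ⟪gradient φ x, -(L⁻¹ • gradient φ x)⟫ = -(L⁻¹ * ‖gradient φ x‖ ^ 2) := by
    rw [inner_neg_right, real_inner_smul_right, real_inner_self_eq_norm_sq]
  have e2 : ‖-(L⁻¹ • gradient φ x)‖ ^ 2 = L⁻¹ ^ 2 * ‖gradient φ x‖ ^ 2 := by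
    rw [norm_neg, norm_smul]
    simp [abs_of_nonneg (inv_nonneg.2 hL), mul_pow]
  rw [e1, e2] at hdesc
  have hchain : φ y ≤ φ x - L⁻¹ / 2 * ‖gradient φ x‖ ^ 2 := by
    have hLne : L ≠ 0 := ne_of_gt hLpos
    have : -(L⁻¹ * ‖gradient φ x‖ ^ 2) + L / 2 * (L⁻¹ ^ 2 * ‖gradient φ x‖ ^ 2)
        = -(L⁻¹ / 2 * ‖gradient φ x‖ ^ 2) := by
      field_simp
      ring
    calc φ y ≤ _ := hmin
    _ ≤ _ := hdesc
    _ = φ x - L⁻¹ / 2 * ‖gradient φ x‖ ^ 2 := by linear_combination this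
  have hφxy : φ x - φ y = g x - g y - ⟪gradient g y, x - y⟫ := by
    simp only [hφ, hc, inner_sub_right]
    ring
  have hgx : gradient φ x = gradient g x - gradient g y := by rw [hφgrad]
  rw [hgx] at hchain
  have hL2 : (0:ℝ) < 2 * L := by linarith
  have : L⁻¹ / 2 * ‖gradient g x - gradient g y‖ ^ 2 ≤ φ x - φ y := by linarith
  rw [hφxy] at this
  have hfin := mul_le_mul_of_nonneg_left this (le_of_lt hL2)
  calc ‖gradient g x - gradient g y‖ ^ 2
      = 2 * L * (L⁻¹ / 2 * ‖gradient g x - gradient g y‖ ^ 2) := by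
        field_simp
    _ ≤ _ := hfin

lemma var_ineq (g : F → ℝ) (hg : Differentiable ℝ g) {W : Set F} (hW : Convex ℝ W)
    {a : F} (ha : a ∈ W) (hmin : ∀ u ∈ W, g a ≤ g u) {u : F} (hu : u ∈ W) :
    0 ≤ ⟪gradient g a, u - a⟫ := by
  have hd : HasDerivAt (fun s : ℝ => g (a + s • (u - a)))
      ⟪gradient g (a + (0:ℝ) • (u - a)), u - a⟫ 0 := line_hasDerivAt g hg a (u - a) 0
  simp only [zero_smul, add_zero] at hd
  rw [hasDerivAt_iff_tendsto_slope] at hd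
  have h2 : Filter.Tendsto (slope (fun s : ℝ => g (a + s • (u - a))) 0) (nhdsWithin 0 (Set.Ioi 0))
      (nhds ⟪gradient g a, u - a⟫) :=
    hd.mono_left (nhdsWithin_mono _ (fun t ht => ne_of_gt ht))
  refine ge_of_tendsto h2 ?_
  filter_upwards [Ioo_mem_nhdsGT_of_mem (by norm_num : (0:ℝ) ∈ Set.Ico 0 1)] with t ht
  rw [slope_def_field]
  simp only [zero_smul, add_zero, sub_zero]
  apply div_nonneg _ (le_of_lt ht.1)
  have hmem : a + t • (u - a) ∈ W := by
    have h := hW ha hu (by linarith [ht.2] : (0:ℝ) ≤ 1 - t) (le_of_lt ht.1) (by ring)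
    have : (1 - t) • a + t • u = a + t • (u - a) := by
      module
    rwa [this] at h
  linarith [hmin _ hmem]

end auxStmt18

set_option maxHeartbeats 1000000 in
theorem stmt_18 (d n : ℕ) (hn : 0 < n)
    (fi : Fin n → EuclideanSpace ℝ (Fin d) → ℝ) (Li p : Fin n → ℝ)
    (hconv : ∀ i, ConvexOn ℝ Set.univ (fi i)) (hdiff : ∀ i, Differentiable ℝ (fi i))
    (hlip : ∀ i, ∀ x y, ‖gradient (fi i) x - gradient (fi i) y‖ ≤ Li i * ‖x - y‖)
    (f : EuclideanSpace ℝ (Fin d) → ℝ)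
    (hf : ∀ u, f u = (1 / (n : ℝ)) * ∑ i, fi i u)
    (W : Set (EuclideanSpace ℝ (Fin d))) (hW : Convex ℝ W)
    (wstar : EuclideanSpace ℝ (Fin d)) (hws : wstar ∈ W)
    (hmin : ∀ u ∈ W, f wstar ≤ f u)
    (hp : ∀ i, p i ∈ Set.Ioo (0 : ℝ) 1) (hsum : ∑ i, p i = 1)
    (LP : ℝ) (hLP : IsGreatest {x : ℝ | ∃ i, x = Li i / ((n : ℝ) * p i)} LP)
    (w wt : EuclideanSpace ℝ (Fin d)) (hw : w ∈ W) (hwt : wt ∈ W)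
    (v : Fin n → EuclideanSpace ℝ (Fin d))
    (hv : ∀ i, v i = (((n : ℝ) * p i)⁻¹) • (gradient (fi i) w - gradient (fi i) wt)
      + gradient f wt) :
    (∑ i, p i • v i = gradient f w) ∧
    ∑ i, p i * ‖v i - gradient f w‖ ^ 2
      ≤ 4 * LP * ((f w - f wstar) + (f wt - f wstar)) := by
  have hfe : f = fun u => (1 / (n : ℝ)) * ∑ i, fi i u := funext hf
  have hn' : ((n : ℝ)) ≠ 0 := Nat.cast_ne_zero.2 hn.ne'
  have hnpos : (0:ℝ) < (n:ℝ) := Nat.cast_pos.2 hn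
  have hp0 : ∀ i, 0 < p i := fun i => (hp i).1
  have hnp : ∀ i, 0 < (n:ℝ) * p i := fun i => mul_pos hnpos (hp0 i)
  -- gradient of f
  have hgradf : ∀ u, HasGradientAt f ((n:ℝ)⁻¹ • ∑ i, gradient (fi i) u) u := by
    intro u
    have hs : HasFDerivAt (fun u => ∑ i, fi i u) (∑ i, fderiv ℝ (fi i) u) u :=
      HasFDerivAt.fun_sum (fun i _ => (hdiff i u).hasFDerivAt)
    have h1 := hs.const_mul (1 / (n:ℝ))
    rw [hasFDerivAt_iff_hasGradientAt] at h1
    have he : (InnerProductSpace.toDual ℝ _).symm ((1/(n:ℝ)) • ∑ i, fderiv ℝ (fi i) u)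
        = (n:ℝ)⁻¹ • ∑ i, gradient (fi i) u := by
      rw [map_smul, map_sum]
      simp [gradient, one_div]
    rw [he] at h1
    rw [hfe]
    exact h1
  have hgf : ∀ u, gradient f u = (n:ℝ)⁻¹ • ∑ i, gradient (fi i) u :=
    fun u => (hgradf u).gradient
  have hdf : Differentiable ℝ f := fun u => (hgradf u).differentiableAt
  -- key sum identity
  have hX : ∀ u1 u2 : EuclideanSpace ℝ (Fin d),
      ∑ i, p i • (((n:ℝ) * p i)⁻¹ • (gradient (fi i) u1 - gradient (fi i) u2))
        = gradient f u1 - gradient f u2 := by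
    intro u1 u2
    have h1 : ∀ i : Fin n, p i • (((n:ℝ) * p i)⁻¹ •
        (gradient (fi i) u1 - gradient (fi i) u2))
        = (n:ℝ)⁻¹ • (gradient (fi i) u1 - gradient (fi i) u2) := by
      intro i
      rw [smul_smul]
      congr 1
      field_simp
      exact div_self (hp0 i).ne'
    calc ∑ i, p i • (((n:ℝ) * p i)⁻¹ • (gradient (fi i) u1 - gradient (fi i) u2))
        = ∑ i, (n:ℝ)⁻¹ • (gradient (fi i) u1 - gradient (fi i) u2) :=
          Finset.sum_congr rfl (fun i _ => h1 i)
      _ = (n:ℝ)⁻¹ • ∑ i, (gradient (fi i) u1 - gradient (fi i) u2) := by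
          rw [Finset.smul_sum]
      _ = gradient f u1 - gradient f u2 := by
          rw [Finset.sum_sub_distrib, smul_sub, hgf, hgf]
  -- Part 1
  have part1 : ∑ i, p i • v i = gradient f w := by
    calc ∑ i, p i • v i
        = ∑ i, (p i • (((n:ℝ) * p i)⁻¹ • (gradient (fi i) w - gradient (fi i) wt))
            + p i • gradient f wt) := by
          refine Finset.sum_congr rfl (fun i _ => ?_)
          rw [hv i, smul_add]
      _ = (gradient f w - gradient f wt) + (∑ i, p i) • gradient f wt := by
          rw [Finset.sum_add_distrib, hX w wt, ← Finset.sum_smul]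
      _ = gradient f w := by rw [hsum, one_smul]; abel
  refine ⟨part1, ?_⟩
  -- Part 2
  rcases subsingleton_or_nontrivial (EuclideanSpace ℝ (Fin d)) with hsub | hnt
  · have hww : w = wstar := Subsingleton.elim _ _
    have hwtw : wt = wstar := Subsingleton.elim _ _
    have h1 : ∑ i, p i * ‖v i - gradient f w‖ ^ 2 = 0 := by
      apply Finset.sum_eq_zero
      intro i _
      rw [Subsingleton.elim (v i - gradient f w) 0]
      simp
    rw [h1, hww, hwtw]
    simp
  have hLi : ∀ i, 0 ≤ Li i := by
    intro i
    obtain ⟨x0, y0, hxy⟩ := exists_pair_ne (EuclideanSpace ℝ (Fin d))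
    have h1 := hlip i x0 y0
    have h2 : 0 < ‖x0 - y0‖ := by rw [norm_pos_iff]; exact sub_ne_zero.2 hxy
    nlinarith [norm_nonneg (gradient (fi i) x0 - gradient (fi i) y0)]
  have hLPub : ∀ i, Li i * ((n:ℝ) * p i)⁻¹ ≤ LP := by
    intro i
    have := hLP.2 ⟨i, rfl⟩
    rwa [div_eq_mul_inv] at this
  have hLPnn : 0 ≤ LP := by
    obtain ⟨i, hi⟩ := hLP.1
    rw [hi]
    exact div_nonneg (hLi i) (hnp i).le
  set a : Fin n → EuclideanSpace ℝ (Fin d) :=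
    fun i => gradient (fi i) w - gradient (fi i) wstar with ha
  set b : Fin n → EuclideanSpace ℝ (Fin d) :=
    fun i => gradient (fi i) wt - gradient (fi i) wstar with hb
  set Bw : Fin n → ℝ :=
    fun i => fi i w - fi i wstar - ⟪gradient (fi i) wstar, w - wstar⟫ with hBw
  set Bt : Fin n → ℝ :=
    fun i => fi i wt - fi i wstar - ⟪gradient (fi i) wstar, wt - wstar⟫ with hBt
  have hcocoW : ∀ i, ‖a i‖ ^ 2 ≤ 2 * Li i * Bw i :=
    fun i => cocoercive (fi i) (hconv i) (hdiff i) (hLi i) (hlip i) w wstar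
  have hcocoT : ∀ i, ‖b i‖ ^ 2 ≤ 2 * Li i * Bt i :=
    fun i => cocoercive (fi i) (hconv i) (hdiff i) (hLi i) (hlip i) wt wstar
  have hBwnn : ∀ i, 0 ≤ Bw i := by
    intro i
    have := convex_grad_ineq (fi i) (hconv i) (hdiff i) wstar w
    simp only [hBw]
    linarith
  have hBtnn : ∀ i, 0 ≤ Bt i := by
    intro i
    have := convex_grad_ineq (fi i) (hconv i) (hdiff i) wstar wt
    simp only [hBt]
    linarith
  have hBsum : ∀ u : EuclideanSpace ℝ (Fin d),
      (n:ℝ)⁻¹ * ∑ i, (fi i u - fi i wstar - ⟪gradient (fi i) wstar, u - wstar⟫)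
      = f u - f wstar - ⟪gradient f wstar, u - wstar⟫ := by
    intro u
    rw [hf u, hf wstar, hgf wstar, real_inner_smul_left, sum_inner,
      Finset.sum_sub_distrib, Finset.sum_sub_distrib]
    ring
  have hvw : 0 ≤ ⟪gradient f wstar, w - wstar⟫ := var_ineq f hdf hW hws hmin hw
  have hvwt : 0 ≤ ⟪gradient f wstar, wt - wstar⟫ := var_ineq f hdf hW hws hmin hwt
  set X : Fin n → EuclideanSpace ℝ (Fin d) :=
    fun i => ((n:ℝ) * p i)⁻¹ • (gradient (fi i) w - gradient (fi i) wt) with hXd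
  set m : EuclideanSpace ℝ (Fin d) := gradient f w - gradient f wt with hm
  have hmX : ∑ i, p i • X i = m := hX w wt
  have hvm : ∀ i, v i - gradient f w = X i - m := by
    intro i
    rw [hv i, hm, hXd]
    abel
  -- step 1: variance reduction
  have step1 : ∑ i, p i * ‖X i - m‖ ^ 2 ≤ ∑ i, p i * ‖X i‖ ^ 2 := by
    have hsum2 : ∑ i, p i * ⟪X i, m⟫ = ‖m‖ ^ 2 := by
      calc ∑ i, p i * ⟪X i, m⟫ = ∑ i, ⟪p i • X i, m⟫ := by
            refine Finset.sum_congr rfl (fun i _ => ?_)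
            exact (real_inner_smul_left _ _ _).symm
        _ = ⟪∑ i, p i • X i, m⟫ := (sum_inner _ _ _).symm
        _ = ⟪m, m⟫ := by rw [hmX]
        _ = ‖m‖ ^ 2 := real_inner_self_eq_norm_sq m
    have key : ∑ i, p i * ‖X i - m‖ ^ 2 = (∑ i, p i * ‖X i‖ ^ 2) - ‖m‖ ^ 2 := by
      have h1 : ∀ i ∈ Finset.univ, p i * ‖X i - m‖ ^ 2
          = p i * ‖X i‖ ^ 2 - 2 * (p i * ⟪X i, m⟫) + p i * ‖m‖ ^ 2 := by
        intro i _
        rw [norm_sub_sq_real]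
        ring
      rw [Finset.sum_congr rfl h1, Finset.sum_add_distrib, Finset.sum_sub_distrib,
        ← Finset.mul_sum, hsum2, ← Finset.sum_mul, hsum]
      ring
    rw [key]
    nlinarith [sq_nonneg ‖m‖]
  -- step 2: per-term bound
  have step2 : ∀ i, p i * ‖X i‖ ^ 2
      ≤ (n:ℝ)⁻¹ * (((n:ℝ) * p i)⁻¹ * (2 * ‖a i‖ ^ 2 + 2 * ‖b i‖ ^ 2)) := by
    intro i
    have hab : gradient (fi i) w - gradient (fi i) wt = a i - b i := by
      simp only [ha, hb]; abel
    have hnX : ‖X i‖ ^ 2 = (((n:ℝ) * p i)⁻¹) ^ 2 * ‖a i - b i‖ ^ 2 := by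
      rw [hXd]
      simp only [hab, norm_smul, Real.norm_eq_abs, mul_pow, sq_abs]
    have habnorm : ‖a i - b i‖ ^ 2 ≤ 2 * ‖a i‖ ^ 2 + 2 * ‖b i‖ ^ 2 := by
      nlinarith [norm_sub_le (a i) (b i), sq_nonneg (‖a i‖ - ‖b i‖),
        norm_nonneg (a i), norm_nonneg (b i), norm_nonneg (a i - b i)]
    have hKnn : (0:ℝ) ≤ ((n:ℝ) * p i)⁻¹ := (inv_nonneg).2 (hnp i).le
    have hpK : p i * ((n:ℝ) * p i)⁻¹ = (n:ℝ)⁻¹ := by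
      field_simp
      exact div_self (hp0 i).ne'
    have heq : p i * (((n:ℝ) * p i)⁻¹) ^ 2 = (n:ℝ)⁻¹ * ((n:ℝ) * p i)⁻¹ := by
      rw [sq, ← mul_assoc, hpK]
    calc p i * ‖X i‖ ^ 2 = p i * (((n:ℝ) * p i)⁻¹) ^ 2 * ‖a i - b i‖ ^ 2 := by
          rw [hnX]; ring
      _ = (n:ℝ)⁻¹ * ((n:ℝ) * p i)⁻¹ * ‖a i - b i‖ ^ 2 := by rw [heq]
      _ ≤ (n:ℝ)⁻¹ * ((n:ℝ) * p i)⁻¹ * (2 * ‖a i‖ ^ 2 + 2 * ‖b i‖ ^ 2) := by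
          apply mul_le_mul_of_nonneg_left habnorm
          positivity
      _ = (n:ℝ)⁻¹ * (((n:ℝ) * p i)⁻¹ * (2 * ‖a i‖ ^ 2 + 2 * ‖b i‖ ^ 2)) := by ring
  -- step 3: cocoercivity per term
  have step3 : ∀ i, ((n:ℝ) * p i)⁻¹ * (2 * ‖a i‖ ^ 2 + 2 * ‖b i‖ ^ 2)
      ≤ 4 * LP * (Bw i + Bt i) := by
    intro i
    have hKnn : (0:ℝ) ≤ ((n:ℝ) * p i)⁻¹ := (inv_nonneg).2 (hnp i).le
    have h1 : ((n:ℝ) * p i)⁻¹ * ‖a i‖ ^ 2 ≤ 2 * LP * Bw i := by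
      calc ((n:ℝ) * p i)⁻¹ * ‖a i‖ ^ 2 ≤ ((n:ℝ) * p i)⁻¹ * (2 * Li i * Bw i) :=
            mul_le_mul_of_nonneg_left (hcocoW i) hKnn
        _ = 2 * (Li i * ((n:ℝ) * p i)⁻¹) * Bw i := by ring
        _ ≤ 2 * LP * Bw i := by
            have h3 := mul_le_mul_of_nonneg_right (hLPub i) (hBwnn i)
            linarith
    have h2 : ((n:ℝ) * p i)⁻¹ * ‖b i‖ ^ 2 ≤ 2 * LP * Bt i := by
      calc ((n:ℝ) * p i)⁻¹ * ‖b i‖ ^ 2 ≤ ((n:ℝ) * p i)⁻¹ * (2 * Li i * Bt i) :=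
            mul_le_mul_of_nonneg_left (hcocoT i) hKnn
        _ = 2 * (Li i * ((n:ℝ) * p i)⁻¹) * Bt i := by ring
        _ ≤ 2 * LP * Bt i := by
            have h3 := mul_le_mul_of_nonneg_right (hLPub i) (hBtnn i)
            linarith
    nlinarith [h1, h2]
  -- assemble
  have hfinal : ∑ i, p i * ‖v i - gradient f w‖ ^ 2
      ≤ (n:ℝ)⁻¹ * ∑ i, (4 * LP * (Bw i + Bt i)) := by
    calc ∑ i, p i * ‖v i - gradient f w‖ ^ 2
        = ∑ i, p i * ‖X i - m‖ ^ 2 := by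
          refine Finset.sum_congr rfl (fun i _ => ?_)
          rw [hvm i]
      _ ≤ ∑ i, p i * ‖X i‖ ^ 2 := step1
      _ ≤ ∑ i, (n:ℝ)⁻¹ * (((n:ℝ) * p i)⁻¹ * (2 * ‖a i‖ ^ 2 + 2 * ‖b i‖ ^ 2)) :=
          Finset.sum_le_sum (fun i _ => step2 i)
      _ ≤ ∑ i, (n:ℝ)⁻¹ * (4 * LP * (Bw i + Bt i)) := by
          refine Finset.sum_le_sum (fun i _ => ?_)
          exact mul_le_mul_of_nonneg_left (step3 i) (by positivity)
      _ = (n:ℝ)⁻¹ * ∑ i, (4 * LP * (Bw i + Bt i)) := by rw [Finset.mul_sum]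
  have hsplit : (n:ℝ)⁻¹ * ∑ i, (4 * LP * (Bw i + Bt i))
      = 4 * LP * ((n:ℝ)⁻¹ * ∑ i, Bw i + (n:ℝ)⁻¹ * ∑ i, Bt i) := by
    rw [← Finset.mul_sum, Finset.sum_add_distrib]
    ring
  have hq1 := hBsum w
  have hq2 := hBsum wt
  have hBwsum : (n:ℝ)⁻¹ * ∑ i, Bw i = f w - f wstar - ⟪gradient f wstar, w - wstar⟫ := hq1
  have hBtsum : (n:ℝ)⁻¹ * ∑ i, Bt i = f wt - f wstar - ⟪gradient f wstar, wt - wstar⟫ := hq2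
  calc ∑ i, p i * ‖v i - gradient f w‖ ^ 2
      ≤ (n:ℝ)⁻¹ * ∑ i, (4 * LP * (Bw i + Bt i)) := hfinal
    _ = 4 * LP * ((n:ℝ)⁻¹ * ∑ i, Bw i + (n:ℝ)⁻¹ * ∑ i, Bt i) := hsplit
    _ ≤ 4 * LP * ((f w - f wstar) + (f wt - f wstar)) := by
        rw [hBwsum, hBtsum]
        nlinarith [hvw, hvwt, hLPnn]
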